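/- arXiv:1707.09721 — 2 statements merged into one kernel-verified Lean document; each statement's English description precedes it below -/
import Mathlib

section
/- For all n ≥ 0, Ch_{n,λ}(x+1) + Ch_{n,λ}(x) = 2·Σ_{m=0}^{n} (x)_{m,λ} S₁(n,m), where Ch_{n,λ}(x) are the degenerate Changhee polynomials of the second kind. -/
open Finset PowerSeries

/-- The degenerate falling factorial `(x)_{n,λ}`. -/
noncomputable def df (l x : ℚ) (n : ℕ) : ℚ := ∏ i ∈ Finset.range n, (x - (i : ℚ) * l)

/-- The formal power series `(1+λt)^{x/λ} := Σ (x)_{n,λ} tⁿ/n!`. -/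
noncomputable def B (l x : ℚ) : PowerSeries ℚ :=
  PowerSeries.mk fun n => df l x n / n.factorial

/-- Signed Stirling numbers of the first kind. -/
def S1 : ℕ → ℕ → ℚ
  | 0, 0 => 1
  | 0, _ + 1 => 0
  | _ + 1, 0 => 0
  | n + 1, k + 1 => S1 n k - (n : ℚ) * S1 n (k + 1)

/-- Stirling numbers of the second kind. -/
def S2 : ℕ → ℕ → ℚ
  | 0, 0 => 1
  | 0, _ + 1 => 0
  | _ + 1, 0 => 0
  | n + 1, k + 1 => ((k : ℚ) + 1) * S2 n (k + 1) + S2 n k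

/-- Degenerate Changhee polynomials of the second kind, built from a family `E`
(intended: Carlitz degenerate Euler polynomials): `Ch_{n,λ}(x) = Σ_{l≤n} S₁(n,l) E_{l,λ}(x)`. -/
noncomputable def Ch (E : ℕ → ℚ → ℚ) (n : ℕ) (x : ℚ) : ℚ :=
  ∑ m ∈ Finset.range (n + 1), S1 n m * E m x

lemma df_succ (l x : ℚ) (n : ℕ) : df l x (n+1) = df l x n * (x - (n : ℚ)*l) :=
  Finset.prod_range_succ _ _

lemma df_vandermonde (l x y : ℚ) (n : ℕ) : df l (x+y) n =
    ∑ k ∈ Finset.range (n+1), (n.choose k : ℚ) * df l x k * df l y (n-k) := by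
  induction n with
  | zero => simp [df]
  | succ n ih =>
    rw [df_succ, ih, Finset.sum_mul]
    have key : ∀ k ∈ Finset.range (n+1),
        (n.choose k : ℚ) * df l x k * df l y (n-k) * ((x+y) - (n : ℚ)*l)
          = (n.choose k : ℚ) * df l x (k+1) * df l y (n-k)
            + (n.choose k : ℚ) * df l x k * df l y (n+1-k) := by
      intro k hk
      rw [Finset.mem_range, Nat.lt_succ_iff] at hk
      have e1 : df l x (k+1) = df l x k * (x - (k : ℚ)*l) := df_succ _ _ _
      have e2 : df l y (n+1-k) = df l y (n-k) * (y - ((n-k : ℕ) : ℚ)*l) := by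
        rw [Nat.succ_sub hk]; exact df_succ _ _ _
      have e3 : ((n-k : ℕ) : ℚ) = (n : ℚ) - (k : ℚ) := by
        push_cast [hk]; ring
      rw [e1, e2, e3]; ring
    rw [Finset.sum_congr rfl key, Finset.sum_add_distrib]
    -- RHS manipulation
    rw [Finset.sum_range_succ'
      (fun k => ((n+1).choose k : ℚ) * df l x k * df l y (n+1-k)) (n+1)]
    have hA : ∀ k ∈ Finset.range (n+1),
        (((n+1).choose (k+1) : ℚ)) * df l x (k+1) * df l y (n+1-(k+1))
          = (n.choose k : ℚ) * df l x (k+1) * df l y (n-k)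
            + (n.choose (k+1) : ℚ) * df l x (k+1) * df l y (n-k) := by
      intro k _
      rw [Nat.succ_sub_succ, Nat.choose_succ_succ]
      push_cast
      ring
    rw [Finset.sum_congr rfl hA, Finset.sum_add_distrib]
    have hB : ∑ k ∈ Finset.range (n+1), (n.choose k : ℚ) * df l x k * df l y (n+1-k)
        = (∑ k ∈ Finset.range (n+1), (n.choose (k+1) : ℚ) * df l x (k+1) * df l y (n-k))
          + df l y (n+1) := by
      rw [Finset.sum_range_succ'
        (fun k => (n.choose k : ℚ) * df l x k * df l y (n+1-k)) n]
      rw [Finset.sum_range_succ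
        (fun k => (n.choose (k+1) : ℚ) * df l x (k+1) * df l y (n-k)) n]
      simp [df, Nat.succ_sub_succ, Nat.choose_succ_self]
    rw [hB]
    simp [df]
    ring

lemma B_mul (l x : ℚ) : B l (x+1) = B l x * B l 1 := by
  ext n
  rw [B, B, B, coeff_mk, PowerSeries.coeff_mul]
  rw [Finset.Nat.sum_antidiagonal_eq_sum_range_succ_mk]
  rw [df_vandermonde, Finset.sum_div]
  refine Finset.sum_congr rfl fun k hk => ?_
  rw [Finset.mem_range, Nat.lt_succ_iff] at hk
  simp only [coeff_mk]
  have h : (n.choose k : ℚ) = (n.factorial : ℚ) / ((k.factorial : ℚ) * ((n-k).factorial : ℚ)) := by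
    rw [eq_div_iff (by positivity), ← mul_assoc]
    exact_mod_cast congrArg (Nat.cast (R := ℚ)) (Nat.choose_mul_factorial_mul_factorial hk)
  rw [h]
  have hk1 : (k.factorial : ℚ) ≠ 0 := by positivity
  have hk2 : ((n-k).factorial : ℚ) ≠ 0 := by positivity
  have hk3 : (n.factorial : ℚ) ≠ 0 := by positivity
  field_simp

lemma E_add (l : ℚ) (E : ℕ → ℚ → ℚ)
    (hE : ∀ x : ℚ, (PowerSeries.mk fun n => E n x / n.factorial) * (B l 1 + 1)
      = 2 * B l x) (n : ℕ) (x : ℚ) :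
    E n (x+1) + E n x = 2 * df l x n := by
  have hne : (B l 1 + 1 : PowerSeries ℚ) ≠ 0 := by
    intro h
    have := congrArg (PowerSeries.constantCoeff (R := ℚ)) h
    rw [map_add, map_one, map_zero, B, PowerSeries.constantCoeff_mk] at this
    norm_num [df] at this
  have key : (PowerSeries.mk fun n => (E n (x+1) + E n x) / n.factorial)
      = 2 * B l x := by
    apply mul_right_cancel₀ hne
    have : (PowerSeries.mk fun n => (E n (x+1) + E n x) / n.factorial)
        = (PowerSeries.mk fun n => E n (x+1) / n.factorial)
          + (PowerSeries.mk fun n => E n x / n.factorial) := by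
      ext m; simp [add_div]
    rw [this, add_mul, hE, hE, B_mul]
    ring
  have := congrArg (PowerSeries.coeff (R := ℚ) n) key
  rw [coeff_mk] at this
  have h2 : (PowerSeries.coeff (R := ℚ) n) (2 * B l x) = 2 * (df l x n / n.factorial) := by
    rw [show (2 : PowerSeries ℚ) = PowerSeries.C (R := ℚ) 2 from (map_ofNat (PowerSeries.C (R := ℚ)) 2).symm, PowerSeries.coeff_C_mul, B,
      coeff_mk]
  rw [h2] at this
  have hf : (n.factorial : ℚ) ≠ 0 := by positivity
  field_simp at this
  linarith [this]

/-- `Ch_{n,λ}(x+1) + Ch_{n,λ}(x) = 2 Σ_{m≤n} (x)_{m,λ} S₁(n,m)`. -/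
theorem stmt7 (l : ℚ) (E : ℕ → ℚ → ℚ)
    (hE : ∀ x : ℚ, (PowerSeries.mk fun n => E n x / n.factorial) * (B l 1 + 1)
      = 2 * B l x) :
    ∀ (n : ℕ) (x : ℚ), Ch E n (x + 1) + Ch E n x =
      2 * ∑ m ∈ Finset.range (n + 1), df l x m * S1 n m := by
  intro n x
  rw [Ch, Ch, ← Finset.sum_add_distrib, Finset.mul_sum]
  refine Finset.sum_congr rfl fun m _ => ?_
  rw [← mul_add, E_add l E hE m x]
  ring
end

section
/- For all r ≥ 1, n ≥ 0, and any x: Σ_{m=0}^{n} Ch^{(r)}_{m}(x) · S_{2,λ}(n,m) = Σ_{m=0}^{n} Ch^{(r)}_{m,λ}(x) · S₂(n,m), where Ch^{(r)}_m(x) are the (non-degenerate) higher-order Changhee polynomials and Ch^{(r)}_{m,λ}(x) the higher-order degenerate Changhee polynomials of the second kind. -/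
open Finset PowerSeries

/-- Degenerate Stirling numbers of the second kind, via
`S_{2,λ}(n,m) = Σ_{l=m}^n S₂(l,m) λ^{n-l} S₁(n,l)`. -/
noncomputable def S2l (l : ℚ) (n m : ℕ) : ℚ :=
  ∑ j ∈ Finset.Icc m n, S2 j m * l ^ (n - j) * S1 n j

lemma S1_eq_zero : ∀ {n k : ℕ}, n < k → S1 n k = 0 := by
  intro n
  induction n with
  | zero => intro k hk; match k, hk with | k+1, _ => rfl
  | succ n ih =>
    intro k hk
    match k, hk with
    | k+1, hk =>
      have h1 : n < k := by omega
      have h2 : n < k + 1 := by omega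
      show S1 n k - (n : ℚ) * S1 n (k+1) = 0
      rw [ih h1, ih h2]; ring

lemma S2_eq_zero : ∀ {n k : ℕ}, n < k → S2 n k = 0 := by
  intro n
  induction n with
  | zero => intro k hk; match k, hk with | k+1, _ => rfl
  | succ n ih =>
    intro k hk
    match k, hk with
    | k+1, hk =>
      have h1 : n < k := by omega
      have h2 : n < k + 1 := by omega
      show ((k : ℚ) + 1) * S2 n (k+1) + S2 n k = 0
      rw [ih h1, ih h2]; ring

lemma S1_zero_succ (k : ℕ) : S1 0 (k+1) = 0 := rfl
lemma S1_succ_zero (n : ℕ) : S1 (n+1) 0 = 0 := rfl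
lemma S2_succ_zero (n : ℕ) : S2 (n+1) 0 = 0 := rfl
lemma S1_succ_succ (n k : ℕ) : S1 (n+1) (k+1) = S1 n k - (n : ℚ) * S1 n (k+1) := rfl
lemma S2_succ_succ (n k : ℕ) : S2 (n+1) (k+1) = ((k : ℚ) + 1) * S2 n (k+1) + S2 n k := rfl

/-- I1 -/
lemma I1 : ∀ n k : ℕ, ∑ j ∈ Finset.range (n+1), S2 n j * S1 j k = if n = k then 1 else 0 := by
  intro n
  induction n with
  | zero =>
    intro k
    rcases k with _ | k <;> simp [S1, S2]
  | succ n ih =>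
    intro k
    rw [Finset.sum_range_succ' (fun j => S2 (n+1) j * S1 j k)]
    simp only [S2_succ_zero, zero_mul, add_zero, S2_succ_succ]
    have expand : ∑ j ∈ Finset.range (n+1), (((j:ℚ)+1) * S2 n (j+1) + S2 n j) * S1 (j+1) k
        = (∑ j ∈ Finset.range (n+1), ((j:ℚ)+1) * S2 n (j+1) * S1 (j+1) k)
          + ∑ j ∈ Finset.range (n+1), S2 n j * S1 (j+1) k := by
      rw [← Finset.sum_add_distrib]; apply Finset.sum_congr rfl; intro j _; ring
    rw [expand]
    have T1 : ∑ j ∈ Finset.range (n+1), ((j:ℚ)+1) * S2 n (j+1) * S1 (j+1) k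
        = ∑ j ∈ Finset.range (n+1), (j:ℚ) * S2 n j * S1 j k := by
      rw [Finset.sum_range_succ' (fun j => (j:ℚ) * S2 n j * S1 j k)]
      rw [Finset.sum_range_succ (fun j => ((j:ℚ)+1) * S2 n (j+1) * S1 (j+1) k)]
      rw [S2_eq_zero (Nat.lt_succ_self n)]
      push_cast
      ring_nf
    rw [T1]
    rcases k with _ | k
    · have : ∀ j ∈ Finset.range (n+1), S2 n j * S1 (j+1) 0 = 0 := by
        intro j _; rw [S1_succ_zero]; ring
      rw [Finset.sum_congr rfl this]
      have : ∀ j ∈ Finset.range (n+1), (j:ℚ) * S2 n j * S1 j 0 = 0 := by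
        intro j hj
        rcases j with _ | j
        · simp
        · rw [S1_succ_zero]; ring
      rw [Finset.sum_congr rfl this]
      simp
    · have : ∀ j ∈ Finset.range (n+1), S2 n j * S1 (j+1) (k+1)
          = S2 n j * S1 j k - (j:ℚ) * S2 n j * S1 j (k+1) := by
        intro j _; rw [S1_succ_succ]; ring
      rw [Finset.sum_congr rfl this, Finset.sum_sub_distrib]
      rw [ih k]
      have : (∑ j ∈ Finset.range (n+1), (j:ℚ) * S2 n j * S1 j (k+1))
          + ((if n = k then 1 else 0) - ∑ j ∈ Finset.range (n+1), (j:ℚ) * S2 n j * S1 j (k+1))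
          = (if n = k then 1 else 0) := by ring
      rw [this]
      by_cases h : n = k <;> simp [h]

/-- I2 -/
lemma I2 : ∀ n k : ℕ, ∑ j ∈ Finset.range (n+1), S1 n j * S2 j k = if n = k then 1 else 0 := by
  intro n
  induction n with
  | zero =>
    intro k
    rcases k with _ | k <;> simp [S1, S2]
  | succ n ih =>
    intro k
    rw [Finset.sum_range_succ' (fun j => S1 (n+1) j * S2 j k)]
    simp only [S1_succ_zero, zero_mul, add_zero, S1_succ_succ]
    have expand : ∑ j ∈ Finset.range (n+1), (S1 n j - (n:ℚ) * S1 n (j+1)) * S2 (j+1) k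
        = (∑ j ∈ Finset.range (n+1), S1 n j * S2 (j+1) k)
          - (n:ℚ) * ∑ j ∈ Finset.range (n+1), S1 n (j+1) * S2 (j+1) k := by
      rw [Finset.mul_sum, ← Finset.sum_sub_distrib]
      apply Finset.sum_congr rfl; intro j _; ring
    rw [expand]
    have T2 : (n:ℚ) * ∑ j ∈ Finset.range (n+1), S1 n (j+1) * S2 (j+1) k
        = (n:ℚ) * (if n = k then 1 else 0) := by
      rcases n with _ | n
      · simp
      congr 1
      rw [← ih k]
      rw [Finset.sum_range_succ' (fun j => S1 (n+1) j * S2 j k)]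
      rw [Finset.sum_range_succ (fun j => S1 (n+1) (j+1) * S2 (j+1) k)]
      rw [S1_eq_zero (Nat.lt_succ_self (n+1)), S1_succ_zero]
      ring
    rw [T2]
    rcases k with _ | k
    · have : ∀ j ∈ Finset.range (n+1), S1 n j * S2 (j+1) 0 = 0 := by
        intro j _; rw [S2_succ_zero]; ring
      rw [Finset.sum_congr rfl this]
      rcases n with _ | n
      · simp
      · simp only [Finset.sum_const_zero, mul_zero, zero_sub, neg_eq_zero, S1_succ_zero]
        simp
    · have : ∀ j ∈ Finset.range (n+1), S1 n j * S2 (j+1) (k+1)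
          = ((k:ℚ)+1) * (S1 n j * S2 j (k+1)) + S1 n j * S2 j k := by
        intro j _; rw [S2_succ_succ]; ring
      rw [Finset.sum_congr rfl this, Finset.sum_add_distrib, ← Finset.mul_sum, ih, ih]
      by_cases h1 : n = k + 1
      · subst h1
        have ha : ¬ (k + 1 = k) := by omega
        have hb : ¬ (k + 1 + 1 = k + 1) := by omega
        simp [ha, hb]
      · by_cases h2 : n = k
        · subst h2; simp
        · have h3 : ¬ (n + 1 = k + 1) := by omega
          simp [h1, h2, h3]

/-- df expansion -/
lemma df_expand (l x : ℚ) : ∀ n : ℕ, df l x n = ∑ k ∈ Finset.range (n+1), S1 n k * l^(n-k) * x^k := by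
  intro n
  induction n with
  | zero => simp [df, S1]
  | succ n ih =>
    have : df l x (n+1) = df l x n * (x - (n:ℚ) * l) := Finset.prod_range_succ _ _
    rw [this, ih]
    rw [Finset.sum_range_succ' (fun k => S1 (n+1) k * l^(n+1-k) * x^k)]
    simp only [S1_succ_zero, zero_mul, mul_zero, add_zero, S1_succ_succ, zero_mul]
    have step : ∀ k ∈ Finset.range (n+1),
        (S1 n k - (n:ℚ) * S1 n (k+1)) * l^(n+1-(k+1)) * x^(k+1)
        = S1 n k * l^(n-k) * x^(k+1) - (n:ℚ) * (S1 n (k+1) * l^(n-k) * x^(k+1)) := by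
      intro k _
      have : n + 1 - (k+1) = n - k := by omega
      rw [this]; ring
    rw [Finset.sum_congr rfl step, Finset.sum_sub_distrib]
    have T : ∑ k ∈ Finset.range (n+1), (n:ℚ) * (S1 n (k+1) * l^(n-k) * x^(k+1))
        = (n:ℚ) * l * ∑ k ∈ Finset.range (n+1), S1 n k * l^(n-k) * x^k := by
      rw [Finset.mul_sum]
      rw [Finset.sum_range_succ' (fun k => (n:ℚ) * l * (S1 n k * l^(n-k) * x^k))]
      rw [Finset.sum_range_succ (fun k => (n:ℚ) * (S1 n (k+1) * l^(n-k) * x^(k+1)))]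
      rw [S1_eq_zero (Nat.lt_succ_self n)]
      have : ∀ k ∈ Finset.range n, (n:ℚ) * (S1 n (k+1) * l^(n-k) * x^(k+1))
          = (n:ℚ) * l * (S1 n (k+1) * l^(n-(k+1)) * x^(k+1)) := by
        intro k hk
        have hk' : k < n := Finset.mem_range.mp hk
        have : n - k = (n - (k+1)) + 1 := by omega
        rw [this, pow_succ]; ring
      rw [Finset.sum_congr rfl this]
      rcases n with _ | n
      · simp
      · simp only [mul_zero, zero_mul, add_zero, mul_zero]
        rw [S1_succ_zero]
        simp
    rw [T]
    have expand2 : (∑ k ∈ Finset.range (n+1), S1 n k * l^(n-k) * x^k) * (x - (n:ℚ)*l)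
        = (∑ k ∈ Finset.range (n+1), S1 n k * l^(n-k) * x^(k+1))
          - (n:ℚ) * l * ∑ k ∈ Finset.range (n+1), S1 n k * l^(n-k) * x^k := by
      rw [Finset.sum_mul, Finset.mul_sum, ← Finset.sum_sub_distrib]
      apply Finset.sum_congr rfl; intro k _; ring
    rw [expand2]


noncomputable def gg (l : ℚ) : PowerSeries ℚ :=
  PowerSeries.mk fun n => if n = 0 then 0 else l^(n-1) / n.factorial

lemma derivative_gg (l : ℚ) : d⁄dX ℚ (gg l) = C l * gg l + 1 := by
  ext n
  rw [PowerSeries.coeff_derivative]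
  rcases n with _ | n
  · simp [gg]
  · simp only [gg, coeff_mk, map_add, PowerSeries.coeff_C_mul, Nat.succ_ne_zero, if_false]
    rw [PowerSeries.coeff_one]
    have h2 : ((n+2).factorial : ℚ) = (n+2) * (n+1).factorial := by
      push_cast [Nat.factorial_succ]; ring
    have h0 : ((n+1).factorial : ℚ) ≠ 0 := Nat.cast_ne_zero.mpr (Nat.factorial_ne_zero _)
    have h0' : ((n+2).factorial : ℚ) ≠ 0 := Nat.cast_ne_zero.mpr (Nat.factorial_ne_zero _)
    simp only [Nat.succ_ne_zero, if_false, Nat.add_sub_cancel]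
    rw [add_zero, h2, pow_succ']
    field_simp
    push_cast; ring

lemma coeff_gg_pow (l : ℚ) : ∀ (k n : ℕ), coeff n ((gg l)^k)
    = (k.factorial : ℚ) * l^(n-k) * S2 n k / n.factorial := by
  intro k
  induction k with
  | zero =>
    intro n
    rcases n with _ | n
    · simp [S2]
    · simp [S2_succ_zero n, PowerSeries.coeff_one]
  | succ k ihk =>
    have hd : d⁄dX ℚ ((gg l)^(k+1))
        = C ((((k:ℚ))+1)*l) * (gg l)^(k+1) + C ((k:ℚ)+1) * (gg l)^k := by
      rw [Derivation.leibniz_pow, derivative_gg]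
      rw [smul_eq_mul, nsmul_eq_mul]
      have hc : ((k+1 : ℕ) : ℚ⟦X⟧) = C ((k:ℚ)+1) := by
        rw [← map_natCast C (k+1)]; push_cast; ring_nf
      rw [hc]
      have hk1 : k + 1 - 1 = k := by omega
      rw [hk1, map_mul]
      ring
    have hrec : ∀ n : ℕ, coeff (n+1) ((gg l)^(k+1)) * ((n:ℚ)+1)
        = ((k:ℚ)+1) * l * coeff n ((gg l)^(k+1)) + ((k:ℚ)+1) * coeff n ((gg l)^k) := by
      intro n
      have h1 := congrArg (coeff n) hd
      rw [PowerSeries.coeff_derivative] at h1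
      rw [h1]
      rw [(coeff n).map_add, PowerSeries.coeff_C_mul, PowerSeries.coeff_C_mul]
    intro n
    induction n with
    | zero =>
      rw [PowerSeries.coeff_zero_eq_constantCoeff, map_pow]
      have hc0 : constantCoeff (gg l) = 0 := by simp [gg]
      rw [hc0, zero_pow (Nat.succ_ne_zero k), S2_eq_zero (Nat.succ_pos k)]
      simp
    | succ n ihn =>
      have h := hrec n
      rw [ihn, ihk n] at h
      have hn0 : ((n:ℚ)+1) ≠ 0 := by positivity
      have hnf : ((n).factorial : ℚ) ≠ 0 := Nat.cast_ne_zero.mpr (Nat.factorial_ne_zero _)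
      have hnf1 : ((n+1).factorial : ℚ) = ((n:ℚ)+1) * n.factorial := by
        push_cast [Nat.factorial_succ]; ring
      have hkf1 : ((k+1).factorial : ℚ) = ((k:ℚ)+1) * k.factorial := by
        push_cast [Nat.factorial_succ]; ring
      have hsub : (n + 1) - (k + 1) = n - k := by omega
      have key : coeff (n+1) ((gg l)^(k+1))
          = (((k:ℚ)+1) * l * (((k+1).factorial:ℚ) * l^(n-(k+1)) * S2 n (k+1) / n.factorial)
            + ((k:ℚ)+1) * ((k.factorial:ℚ) * l^(n-k) * S2 n k / n.factorial)) / ((n:ℚ)+1) := by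
        rw [eq_div_iff hn0, h, hkf1]
      rw [key, hsub, S2_succ_succ, hnf1, hkf1]
      by_cases hc : k + 1 ≤ n
      · have hl : l * l^(n-(k+1)) = l^(n-k) := by
          rw [← pow_succ']
          congr 1
          omega
        rw [← hl]
        field_simp
      · have hz : S2 n (k+1) = 0 := S2_eq_zero (by omega)
        have hz2 : n - k = 0 := by omega
        rw [hz, hz2]
        field_simp
        ring

noncomputable def phi (l : ℚ) (f : PowerSeries ℚ) : PowerSeries ℚ :=
  PowerSeries.mk fun m => ∑ n ∈ Finset.range (m+1), coeff n f * coeff m ((gg l)^n)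

lemma coeff_phi (l : ℚ) (f : PowerSeries ℚ) (m : ℕ) :
    coeff m (phi l f) = ∑ n ∈ Finset.range (m+1), coeff n f * coeff m ((gg l)^n) :=
  coeff_mk _ _

lemma coeff_gg_pow_zero (l : ℚ) {m n : ℕ} (h : m < n) : coeff m ((gg l)^n) = 0 := by
  rw [coeff_gg_pow, S2_eq_zero h]
  simp

lemma triangle_sq (m : ℕ) (F : ℕ × ℕ → ℚ) (hF : ∀ p : ℕ × ℕ, m < p.1 + p.2 → F p = 0) :
    ∑ n ∈ Finset.range (m+1), ∑ p ∈ Finset.HasAntidiagonal.antidiagonal n, F p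
      = ∑ p ∈ Finset.range (m+1) ×ˢ Finset.range (m+1), F p := by
  rw [Finset.sum_sigma']
  have step1 : ∑ x ∈ (Finset.range (m+1)).sigma (fun n => Finset.HasAntidiagonal.antidiagonal n), F x.2
      = ∑ p ∈ (Finset.range (m+1) ×ˢ Finset.range (m+1)).filter (fun p => p.1 + p.2 ≤ m), F p := by
    apply Finset.sum_nbij' (fun x => x.2) (fun p => ⟨p.1 + p.2, p⟩)
    · intro a ha
      simp only [Finset.mem_sigma, Finset.mem_range, Finset.HasAntidiagonal.mem_antidiagonal] at ha
      simp only [Finset.mem_filter, Finset.mem_product, Finset.mem_range]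
      omega
    · intro p hp
      simp only [Finset.mem_filter, Finset.mem_product, Finset.mem_range] at hp
      refine Finset.mem_sigma.mpr ⟨Finset.mem_range.mpr (show p.1 + p.2 < m + 1 by omega), ?_⟩
      simp [Finset.HasAntidiagonal.mem_antidiagonal]
    · intro a ha
      simp only [Finset.mem_sigma, Finset.mem_range, Finset.HasAntidiagonal.mem_antidiagonal] at ha
      exact Sigma.ext ha.2 (by simp)
    · intro p hp
      rfl
    · intro a ha
      rfl
  rw [step1]
  apply Finset.sum_subset (Finset.filter_subset _ _)
  intro p hp hnp
  apply hF
  simp only [Finset.mem_filter, hp, true_and] at hnp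
  omega

lemma phi_mul (l : ℚ) (f₁ f₂ : PowerSeries ℚ) : phi l (f₁ * f₂) = phi l f₁ * phi l f₂ := by
  ext m
  rw [coeff_phi, PowerSeries.coeff_mul]
  have hR : ∑ p ∈ Finset.HasAntidiagonal.antidiagonal m, coeff p.1 (phi l f₁) * coeff p.2 (phi l f₂)
      = ∑ p ∈ Finset.range (m+1) ×ˢ Finset.range (m+1),
          coeff p.1 f₁ * coeff p.2 f₂ * coeff m ((gg l)^(p.1 + p.2)) := by
    have hterm : ∀ p ∈ Finset.HasAntidiagonal.antidiagonal m,
        coeff p.1 (phi l f₁) * coeff p.2 (phi l f₂)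
          = ∑ i ∈ Finset.range (m+1), ∑ j ∈ Finset.range (m+1),
              (coeff i f₁ * coeff p.1 ((gg l)^i)) * (coeff j f₂ * coeff p.2 ((gg l)^j)) := by
      intro p hp
      rw [Finset.HasAntidiagonal.mem_antidiagonal] at hp
      rw [coeff_phi, coeff_phi]
      have e1 : ∑ n ∈ Finset.range (p.1+1), coeff n f₁ * coeff p.1 ((gg l)^n)
          = ∑ n ∈ Finset.range (m+1), coeff n f₁ * coeff p.1 ((gg l)^n) := by
        apply Finset.sum_subset
        · apply Finset.range_subset_range.mpr; omega
        · intro i _ hi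
          rw [coeff_gg_pow_zero l (by simp only [Finset.mem_range] at hi ⊢; omega), mul_zero]
      have e2 : ∑ n ∈ Finset.range (p.2+1), coeff n f₂ * coeff p.2 ((gg l)^n)
          = ∑ n ∈ Finset.range (m+1), coeff n f₂ * coeff p.2 ((gg l)^n) := by
        apply Finset.sum_subset
        · apply Finset.range_subset_range.mpr; omega
        · intro i _ hi
          rw [coeff_gg_pow_zero l (by simp only [Finset.mem_range] at hi ⊢; omega), mul_zero]
      rw [e1, e2, Finset.sum_mul_sum]
    rw [Finset.sum_congr rfl hterm]
    rw [Finset.sum_comm]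
    have swap2 : ∀ i ∈ Finset.range (m+1),
        ∑ p ∈ Finset.HasAntidiagonal.antidiagonal m, ∑ j ∈ Finset.range (m+1),
            (coeff i f₁ * coeff p.1 ((gg l)^i)) * (coeff j f₂ * coeff p.2 ((gg l)^j))
          = ∑ j ∈ Finset.range (m+1),
              coeff i f₁ * coeff j f₂ * coeff m ((gg l)^(i+j)) := by
      intro i _
      rw [Finset.sum_comm]
      apply Finset.sum_congr rfl
      intro j _
      have : coeff m ((gg l)^(i+j)) = ∑ p ∈ Finset.HasAntidiagonal.antidiagonal m,
          coeff p.1 ((gg l)^i) * coeff p.2 ((gg l)^j) := by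
        rw [pow_add, PowerSeries.coeff_mul]
      rw [this, Finset.mul_sum]
      apply Finset.sum_congr rfl
      intro p _
      ring
    rw [Finset.sum_congr rfl swap2, ← Finset.sum_product']
  rw [hR]
  have hL : ∑ n ∈ Finset.range (m+1), coeff n (f₁ * f₂) * coeff m ((gg l)^n)
      = ∑ n ∈ Finset.range (m+1), ∑ p ∈ Finset.HasAntidiagonal.antidiagonal n,
          coeff p.1 f₁ * coeff p.2 f₂ * coeff m ((gg l)^(p.1+p.2)) := by
    apply Finset.sum_congr rfl
    intro n _
    rw [PowerSeries.coeff_mul, Finset.sum_mul]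
    apply Finset.sum_congr rfl
    intro p hp
    rw [Finset.HasAntidiagonal.mem_antidiagonal] at hp
    rw [hp]
  rw [hL]
  exact triangle_sq m _ (fun p hp => by
    rw [coeff_gg_pow_zero l hp, mul_zero])

lemma phi_one (l : ℚ) : phi l 1 = 1 := by
  ext m
  rw [coeff_phi]
  rw [Finset.sum_eq_single 0]
  · simp
  · intro n _ hn
    rw [PowerSeries.coeff_one, if_neg hn]
    ring
  · intro h
    exact absurd (Finset.mem_range.mpr (Nat.succ_pos m)) h

lemma phi_add (l : ℚ) (f₁ f₂ : PowerSeries ℚ) : phi l (f₁ + f₂) = phi l f₁ + phi l f₂ := by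
  ext m
  simp only [coeff_phi, map_add, add_mul, Finset.sum_add_distrib]

lemma phi_C_mul (l a : ℚ) (f : PowerSeries ℚ) : phi l (C a * f) = C a * phi l f := by
  ext m
  simp only [coeff_phi, PowerSeries.coeff_C_mul, Finset.mul_sum, mul_assoc]

lemma phi_pow (l : ℚ) (f : PowerSeries ℚ) : ∀ r : ℕ, phi l (f^r) = (phi l f)^r := by
  intro r
  induction r with
  | zero => simpa using phi_one l
  | succ r ih => rw [pow_succ, pow_succ, phi_mul, ih]

lemma phi_B (l x : ℚ) : phi l (B l x) = PowerSeries.mk fun n => x^n / n.factorial := by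
  ext m
  rw [coeff_phi, coeff_mk]
  have hmf : ((m.factorial : ℚ)) ≠ 0 := Nat.cast_ne_zero.mpr (Nat.factorial_ne_zero _)
  have hterm : ∀ n ∈ Finset.range (m+1),
      coeff n (B l x) * coeff m ((gg l)^n)
        = (df l x n * l^(m-n) * S2 m n) / m.factorial := by
    intro n _
    rw [coeff_gg_pow]
    have hnf : ((n.factorial : ℚ)) ≠ 0 := Nat.cast_ne_zero.mpr (Nat.factorial_ne_zero _)
    simp only [B, coeff_mk]
    field_simp
  rw [Finset.sum_congr rfl hterm, ← Finset.sum_div]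
  congr 1
  -- key : ∑ df l x n * l^(m-n) * S2 m n = x^m
  have expand : ∀ n ∈ Finset.range (m+1),
      df l x n * l^(m-n) * S2 m n
        = ∑ k ∈ Finset.range (m+1), S2 m n * S1 n k * (l^(m-k) * x^k) := by
    intro n hn
    rw [Finset.mem_range] at hn
    rw [df_expand, Finset.sum_mul, Finset.sum_mul]
    have ext1 : ∑ k ∈ Finset.range (n+1), S1 n k * l^(n-k) * x^k * l^(m-n) * S2 m n
        = ∑ k ∈ Finset.range (m+1), S1 n k * l^(n-k) * x^k * l^(m-n) * S2 m n := by
      apply Finset.sum_subset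
      · apply Finset.range_subset_range.mpr; omega
      · intro k _ hk
        rw [S1_eq_zero (by simp only [Finset.mem_range] at hk ⊢; omega)]
        ring
    rw [ext1]
    apply Finset.sum_congr rfl
    intro k _
    by_cases hkn : k ≤ n
    · have : l^(n-k) * l^(m-n) = l^(m-k) := by
        rw [← pow_add]
        congr 1
        omega
      rw [← this]
      ring
    · rw [S1_eq_zero (by omega)]
      ring
  rw [Finset.sum_congr rfl expand, Finset.sum_comm]
  have inner : ∀ k ∈ Finset.range (m+1),
      ∑ n ∈ Finset.range (m+1), S2 m n * S1 n k * (l^(m-k) * x^k)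
        = (if m = k then 1 else 0) * (l^(m-k) * x^k) := by
    intro k _
    rw [← Finset.sum_mul, I1]
  rw [Finset.sum_congr rfl inner]
  simp only [ite_mul, one_mul, zero_mul]
  rw [Finset.sum_ite_eq (Finset.range (m+1)) m (fun k => (l^(m-k) * x^k))]
  simp

lemma ch_inv (E : ℕ → ℚ → ℚ) (j : ℕ) (x : ℚ) :
    ∑ m ∈ Finset.range (j+1), Ch E m x * S2 j m = E j x := by
  have hterm : ∀ m ∈ Finset.range (j+1),
      Ch E m x * S2 j m = ∑ k ∈ Finset.range (j+1), S2 j m * S1 m k * E k x := by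
    intro m hm
    rw [Finset.mem_range] at hm
    rw [Ch, Finset.sum_mul]
    have ext1 : ∑ k ∈ Finset.range (m+1), S1 m k * E k x * S2 j m
        = ∑ k ∈ Finset.range (j+1), S1 m k * E k x * S2 j m := by
      apply Finset.sum_subset
      · apply Finset.range_subset_range.mpr; omega
      · intro k _ hk
        rw [S1_eq_zero (by simp only [Finset.mem_range] at hk ⊢; omega)]
        ring
    rw [ext1]
    apply Finset.sum_congr rfl
    intro k _
    ring
  rw [Finset.sum_congr rfl hterm, Finset.sum_comm]
  have inner : ∀ k ∈ Finset.range (j+1),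
      ∑ m ∈ Finset.range (j+1), S2 j m * S1 m k * E k x
        = (if j = k then 1 else 0) * E k x := by
    intro k _
    rw [← Finset.sum_mul, I1]
  rw [Finset.sum_congr rfl inner]
  simp only [ite_mul, one_mul, zero_mul]
  rw [Finset.sum_ite_eq (Finset.range (j+1)) j (fun k => E k x)]
  simp



/-- `Σ_{m≤n} Ch⁽ʳ⁾_m(x) S_{2,λ}(n,m) = Σ_{m≤n} Ch⁽ʳ⁾_{m,λ}(x) S₂(n,m)`, where `E0` are the
order-r Euler polynomials (λ = 0 case) and `El` the order-r degenerate Euler polynomials. -/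
theorem stmt12 (l : ℚ) (r : ℕ) (hr : 1 ≤ r) (E0 El : ℕ → ℚ → ℚ)
    (hE0 : ∀ x : ℚ, (PowerSeries.mk fun n => E0 n x / n.factorial) *
        ((PowerSeries.mk fun n => (1 : ℚ) / n.factorial) + 1) ^ r
      = 2 ^ r * PowerSeries.mk fun n => x ^ n / n.factorial)
    (hEl : ∀ x : ℚ, (PowerSeries.mk fun n => El n x / n.factorial) * (B l 1 + 1) ^ r
      = 2 ^ r * B l x) :
    ∀ (n : ℕ) (x : ℚ),
      ∑ m ∈ Finset.range (n + 1), Ch E0 m x * S2l l n m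
        = ∑ m ∈ Finset.range (n + 1), Ch El m x * S2 n m := by
  -- notation
  have htwo : (2 : ℚ⟦X⟧) = C 2 := (map_ofNat C 2).symm
  have hone : (PowerSeries.mk fun n => (1:ℚ)^n / n.factorial)
      = PowerSeries.mk fun n => (1:ℚ) / n.factorial := by
    ext m; simp
  have hne : ((PowerSeries.mk fun n => (1 : ℚ) / n.factorial) + 1) ^ r ≠ 0 := by
    intro h0
    have h1 := congrArg (constantCoeff) h0
    rw [map_pow, map_add, map_one] at h1
    have h2 : constantCoeff (PowerSeries.mk fun n => (1:ℚ) / n.factorial) = 1 := by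
      rw [← PowerSeries.coeff_zero_eq_constantCoeff, coeff_mk]
      simp
    rw [h2, map_zero] at h1
    norm_num at h1
  -- key : phi of degenerate Euler g.f. is classical Euler g.f.
  have key : ∀ x : ℚ, phi l (PowerSeries.mk fun n => El n x / n.factorial)
      = PowerSeries.mk fun n => E0 n x / n.factorial := by
    intro x
    have h1 := congrArg (phi l) (hEl x)
    rw [phi_mul, phi_pow, phi_add, phi_one, phi_B, hone] at h1
    rw [htwo, ← map_pow, phi_C_mul, phi_B, map_pow, ← htwo] at h1
    exact mul_right_cancel₀ hne (h1.trans (hE0 x).symm)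
  -- L : E0 in terms of El
  have L : ∀ (n : ℕ) (x : ℚ), E0 n x
      = ∑ j ∈ Finset.range (n+1), S2 n j * l^(n-j) * El j x := by
    intro n x
    have hc := congrArg (coeff n) (key x)
    rw [coeff_phi, coeff_mk] at hc
    have hnf : ((n.factorial : ℚ)) ≠ 0 := Nat.cast_ne_zero.mpr (Nat.factorial_ne_zero _)
    have hterm : ∀ j ∈ Finset.range (n+1),
        coeff j (PowerSeries.mk fun i => El i x / i.factorial) * coeff n ((gg l)^j)
          = (S2 n j * l^(n-j) * El j x) / n.factorial := by
      intro j _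
      rw [coeff_mk, coeff_gg_pow]
      have hjf : ((j.factorial : ℚ)) ≠ 0 := Nat.cast_ne_zero.mpr (Nat.factorial_ne_zero _)
      field_simp
    rw [Finset.sum_congr rfl hterm, ← Finset.sum_div] at hc
    field_simp at hc
    linarith [hc]
  intro n x
  -- RHS
  rw [ch_inv El n x]
  -- LHS
  have step1 : ∀ m ∈ Finset.range (n+1),
      Ch E0 m x * S2l l n m
        = ∑ j ∈ Finset.range (n+1), Ch E0 m x * (S2 j m * l^(n-j) * S1 n j) := by
    intro m hm
    rw [Finset.mem_range] at hm
    rw [S2l]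
    have ext1 : ∑ j ∈ Finset.Icc m n, S2 j m * l^(n-j) * S1 n j
        = ∑ j ∈ Finset.range (n+1), S2 j m * l^(n-j) * S1 n j := by
      apply Finset.sum_subset
      · intro j hj
        rw [Finset.mem_Icc] at hj
        rw [Finset.mem_range]
        omega
      · intro j hj hj2
        rw [Finset.mem_range] at hj
        rw [Finset.mem_Icc] at hj2
        rw [S2_eq_zero (by omega)]
        ring
    rw [ext1, Finset.mul_sum]
  rw [Finset.sum_congr rfl step1, Finset.sum_comm]
  have step2 : ∀ j ∈ Finset.range (n+1),
      ∑ m ∈ Finset.range (n+1), Ch E0 m x * (S2 j m * l^(n-j) * S1 n j)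
        = l^(n-j) * S1 n j * E0 j x := by
    intro j hj
    rw [Finset.mem_range] at hj
    have e1 : ∑ m ∈ Finset.range (n+1), Ch E0 m x * (S2 j m * l^(n-j) * S1 n j)
        = ∑ m ∈ Finset.range (n+1), (Ch E0 m x * S2 j m) * (l^(n-j) * S1 n j) := by
      apply Finset.sum_congr rfl; intro m _; ring
    rw [e1, ← Finset.sum_mul]
    have e2 : ∑ m ∈ Finset.range (n+1), Ch E0 m x * S2 j m
        = ∑ m ∈ Finset.range (j+1), Ch E0 m x * S2 j m := by
      symm
      apply Finset.sum_subset
      · apply Finset.range_subset_range.mpr; omega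
      · intro m _ hm
        rw [S2_eq_zero (by simp only [Finset.mem_range] at hm ⊢; omega)]
        ring
    rw [e2, ch_inv]
    ring
  rw [Finset.sum_congr rfl step2]
  -- substitute L and finish with I2
  have step3 : ∀ j ∈ Finset.range (n+1),
      l^(n-j) * S1 n j * E0 j x
        = ∑ d ∈ Finset.range (n+1), S1 n j * S2 j d * (l^(n-d) * El d x) := by
    intro j hj
    rw [Finset.mem_range] at hj
    rw [L j x, Finset.mul_sum]
    have ext1 : ∑ d ∈ Finset.range (j+1), l^(n-j) * S1 n j * (S2 j d * l^(j-d) * El d x)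
        = ∑ d ∈ Finset.range (n+1), l^(n-j) * S1 n j * (S2 j d * l^(j-d) * El d x) := by
      apply Finset.sum_subset
      · apply Finset.range_subset_range.mpr; omega
      · intro d _ hd
        rw [S2_eq_zero (by simp only [Finset.mem_range] at hd ⊢; omega)]
        ring
    rw [ext1]
    apply Finset.sum_congr rfl
    intro d hd
    rw [Finset.mem_range] at hd
    by_cases hdj : d ≤ j
    · have hl : l^(n-j) * l^(j-d) = l^(n-d) := by
        rw [← pow_add]
        congr 1
        omega
      rw [← hl]
      ring
    · rw [S2_eq_zero (by omega)]
      ring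
  rw [Finset.sum_congr rfl step3, Finset.sum_comm]
  have step4 : ∀ d ∈ Finset.range (n+1),
      ∑ j ∈ Finset.range (n+1), S1 n j * S2 j d * (l^(n-d) * El d x)
        = (if n = d then 1 else 0) * (l^(n-d) * El d x) := by
    intro d _
    rw [← Finset.sum_mul, I2]
  rw [Finset.sum_congr rfl step4]
  simp only [ite_mul, one_mul, zero_mul]
  rw [Finset.sum_ite_eq (Finset.range (n+1)) n (fun d => l^(n-d) * El d x)]
  simp
end
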